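/- Let X, Y, W be real Banach spaces, let L be a nonempty symmetric closed subset of S_X × S_{Y*} having property (P), and let (Z, ‖·‖_Z) be a Banach space which is a linear subspace of C_{b,e}(L, W) such that (i) ‖Φ‖_Z ≥ ‖Φ‖_∞ for all Φ ∈ Z, and (ii) Z contains every map [T]⊕w : (x,y*) ↦ y*(T(x))·w with T : X → Y a finite-rank bounded linear operator and w ∈ W, with ‖[T]⊕w‖_Z ≤ ‖T‖·‖w‖. Then the following Bishop–Phelps–Bollobás property holds: for every ε > 0 there exists η(ε) > 0 such that whenever Φ ∈ Z with ‖Φ‖_∞ = 1 and (x,y*) ∈ L satisfy ‖Φ(x,y*)‖ > 1 − η(ε), there exist Ψ ∈ Z with ‖Ψ‖_∞ = 1 and (z,t*) ∈ L such that ‖Ψ(z,t*)‖ = 1, ‖x−z‖ + ‖y*−t*‖ < ε and ‖Ψ−Φ‖_∞ < ε. -/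

import Mathlib

open Filter Topology Set

noncomputable section

variable {X Y W : Type*}
  [NormedAddCommGroup X] [NormedSpace ℝ X]
  [NormedAddCommGroup Y] [NormedSpace ℝ Y]
  [NormedAddCommGroup W] [NormedSpace ℝ W]

/-- The Hausdorff distance between the symmetric pairs `Γ p = {p, -p}` and `Γ q = {q, -q}`
in `X × Y*` with the sum norm. -/
def dHG (p q : X × (Y →L[ℝ] ℝ)) : ℝ :=
  min (‖p.1 - q.1‖ + ‖p.2 - q.2‖) (‖p.1 + q.1‖ + ‖p.2 + q.2‖)

/-- Property (P) for a subset `L ⊆ S_X × S_{Y*}`. -/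
def PropP (L : Set (X × (Y →L[ℝ] ℝ))) : Prop :=
  ∃ ε₀ > (0 : ℝ), ∀ ε : ℝ, 0 < ε → ε < ε₀ → ∃ ϖ > (0 : ℝ), ∀ p ∈ L,
    ∃ (xs : X →L[ℝ] ℝ) (ye : Y), ‖xs‖ ≤ 1 ∧ ‖ye‖ ≤ 1 ∧
      ∀ q ∈ L, ε ≤ dHG p q → |xs q.1| + |q.2 ye| ≤ xs p.1 + p.2 ye - ϖ

/-- The sup norm `‖Φ‖_∞` of a function over `L`. -/
def supNormOn (L : Set (X × (Y →L[ℝ] ℝ))) (Φ : X × (Y →L[ℝ] ℝ) → W) : ℝ :=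
  sSup ((fun p => ‖Φ p‖) '' L)

/-- Membership in `C_{b,e}(L, W)`: bounded, continuous (on `L`) and even. -/
def IsCbe (L : Set (X × (Y →L[ℝ] ℝ))) (Φ : X × (Y →L[ℝ] ℝ) → W) : Prop :=
  ContinuousOn Φ L ∧ BddAbove ((fun p => ‖Φ p‖) '' L) ∧ ∀ p ∈ L, Φ (-p) = Φ p

/-- `Φ` attains `d_H`-strongly its maximum on `L`. -/
def AttainsDHStrongly (L : Set (X × (Y →L[ℝ] ℝ))) (Φ : X × (Y →L[ℝ] ℝ) → W) : Prop :=
  ∃ p₀ ∈ L, ‖Φ p₀‖ = supNormOn L Φ ∧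
    ∀ u : ℕ → X × (Y →L[ℝ] ℝ), (∀ n, u n ∈ L) →
      Tendsto (fun n => ‖Φ (u n)‖) atTop (𝓝 (supNormOn L Φ)) →
      Tendsto (fun n => dHG (u n) p₀) atTop (𝓝 0)

/-- A finite-rank continuous linear operator. -/
def FinRank (T : X →L[ℝ] Y) : Prop :=
  FiniteDimensional ℝ ↥(LinearMap.range T.toLinearMap)

/-- A porous subset of a (pseudo)metric space. -/
def IsPorous {M : Type*} [PseudoMetricSpace M] (A : Set M) : Prop :=
  ∃ lam : ℝ, 0 < lam ∧ lam ≤ 1 ∧ ∃ r₀ > (0 : ℝ), ∀ x : M, ∀ r : ℝ, 0 < r → r ≤ r₀ →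
    ∃ y : M, Metric.ball y (lam * r) ⊆ Metric.ball x r ∩ Aᶜ

/-- A σ-porous subset of a (pseudo)metric space. -/
def IsSigmaPorous {M : Type*} [PseudoMetricSpace M] (A : Set M) : Prop :=
  ∃ f : ℕ → Set M, (∀ n, IsPorous (f n)) ∧ A = ⋃ n, f n

set_option linter.unusedSectionVars false
set_option linter.unusedVariables false
set_option maxHeartbeats 8000000
set_option synthInstance.maxHeartbeats 1000000

section auxiliaries

variable {Z : Type*} [NormedAddCommGroup Z] [NormedSpace ℝ Z]

lemma exists_seq_aux {α : Type*} (P : ℕ → α → Prop) (R : ℕ → α → α → Prop) (a0 : α) (h0 : P 0 a0)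
    (hstep : ∀ n a, P n a → ∃ b, P (n+1) b ∧ R n a b) :
    ∃ u : ℕ → α, u 0 = a0 ∧ (∀ n, P n (u n)) ∧ ∀ n, R n (u n) (u (n+1)) := by
  choose f hf1 hf2 using hstep
  let u : ∀ n : ℕ, {a // P n a} := fun n =>
    Nat.rec ⟨a0, h0⟩ (fun n ih => ⟨f n ih.1 ih.2, hf1 n ih.1 ih.2⟩) n
  exact ⟨fun n => (u n).1, rfl, fun n => (u n).2, fun n => hf2 n (u n).1 (u n).2⟩

lemma norming_fst {x : X} (h1 : ‖x‖ = 1) : ∃ g : X →L[ℝ] ℝ, ‖g‖ = 1 ∧ g x = 1 := by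
  have hx : x ≠ 0 := by intro h; rw [h, norm_zero] at h1; norm_num at h1
  obtain ⟨g, hg, hgx⟩ := exists_dual_vector ℝ x (norm_ne_zero_iff.mpr hx)
  refine ⟨g, hg, ?_⟩
  simpa [h1] using hgx

lemma norming_snd {f : Y →L[ℝ] ℝ} (h1 : ‖f‖ = 1) {b : ℝ} (hb : b < 1) :
    ∃ y : Y, ‖y‖ ≤ 1 ∧ b < f y ∧ f y ≤ 1 := by
  obtain ⟨y₀, hy₀, hv⟩ := f.exists_lt_apply_of_lt_opNorm (by rw [h1]; exact hb)
  have habs : b < |f y₀| := by rwa [Real.norm_eq_abs] at hv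
  have hup : ∀ y : Y, ‖y‖ ≤ 1 → f y ≤ 1 := by
    intro y hy
    have h2 := f.le_opNorm y
    rw [h1, one_mul, Real.norm_eq_abs] at h2
    linarith [le_abs_self (f y)]
  rcases le_or_gt 0 (f y₀) with h | h
  · exact ⟨y₀, hy₀.le, by rwa [abs_of_nonneg h] at habs, hup _ hy₀.le⟩
  · refine ⟨-y₀, by simpa using hy₀.le, ?_, hup _ (by simpa using hy₀.le)⟩
    rw [map_neg]
    rwa [abs_of_neg h] at habs

variable {L : Set (X × (Y →L[ℝ] ℝ))} {j : Z →ₗ[ℝ] (X × (Y →L[ℝ] ℝ)) → W}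

lemma aux_le_sup (hjmem : ∀ Φ : Z, IsCbe L (j Φ)) (Φ : Z) {p} (hp : p ∈ L) :
    ‖j Φ p‖ ≤ supNormOn L (j Φ) := le_csSup (hjmem Φ).2.1 ⟨p, hp, rfl⟩

lemma aux_sup_le (hLne : L.Nonempty) (Φ : Z) {C : ℝ} (h : ∀ p ∈ L, ‖j Φ p‖ ≤ C) :
    supNormOn L (j Φ) ≤ C :=
  csSup_le (hLne.image _) (by rintro _ ⟨p, hp, rfl⟩; exact h p hp)

lemma aux_tri (hLne : L.Nonempty) (hjmem : ∀ Φ : Z, IsCbe L (j Φ))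
    (hjnorm : ∀ Φ : Z, supNormOn L (j Φ) ≤ ‖Φ‖) (Φ₁ Φ₂ : Z) :
    supNormOn L (j Φ₁) ≤ supNormOn L (j Φ₂) + ‖Φ₁ - Φ₂‖ := by
  apply aux_sup_le hLne
  intro p hp
  have h1 : j Φ₁ p = j Φ₂ p + j (Φ₁ - Φ₂) p := by
    rw [map_sub]; simp
  rw [h1]
  have h2 : ‖j (Φ₁ - Φ₂) p‖ ≤ ‖Φ₁ - Φ₂‖ :=
    (aux_le_sup hjmem _ hp).trans (hjnorm _)
  calc ‖j Φ₂ p + j (Φ₁ - Φ₂) p‖ ≤ ‖j Φ₂ p‖ + ‖j (Φ₁ - Φ₂) p‖ := norm_add_le _ _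
    _ ≤ supNormOn L (j Φ₂) + ‖Φ₁ - Φ₂‖ := add_le_add (aux_le_sup hjmem _ hp) h2

theorem key_step (hLne : L.Nonempty)
    (hLsphere : ∀ p ∈ L, ‖p.1‖ = 1 ∧ ‖p.2‖ = 1)
    (hLsym : ∀ p ∈ L, -p ∈ L)
    (hjmem : ∀ Φ : Z, IsCbe L (j Φ))
    (hjcontains : ∀ T : X →L[ℝ] Y, FinRank T → ∀ w : W,
      ∃ Φ : Z, (∀ p ∈ L, j Φ p = (p.2 (T p.1)) • w) ∧ ‖Φ‖ ≤ ‖T‖ * ‖w‖)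
    {e ϖ r γ γ' : ℝ} (hϖ0 : 0 < ϖ) (hϖ1 : ϖ ≤ 1) (hr0 : 0 < r) (hr1 : r ≤ 1)
    (hγ0 : 0 < γ) (hγ : γ ≤ r * ϖ / 64) (hγ'0 : 0 < γ') (hγ' : γ' ≤ r * ϖ / 64)
    (hPt : ∀ p ∈ L, ∃ (xs : X →L[ℝ] ℝ) (ye : Y), ‖xs‖ ≤ 1 ∧ ‖ye‖ ≤ 1 ∧
      ϖ ≤ xs p.1 + p.2 ye ∧
      ∀ q ∈ L, e ≤ dHG p q → |xs q.1| + |q.2 ye| ≤ xs p.1 + p.2 ye - ϖ)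
    (Φ : Z) {p : X × (Y →L[ℝ] ℝ)} (hp : p ∈ L)
    (hMlo : 1/2 ≤ supNormOn L (j Φ)) (hMhi : supNormOn L (j Φ) ≤ 2)
    (hnear : supNormOn L (j Φ) - γ < ‖j Φ p‖) :
    ∃ (Φ' : Z) (p' : X × (Y →L[ℝ] ℝ)), p' ∈ L ∧ ‖Φ' - Φ‖ ≤ 2 * r ∧
      ‖p.1 - p'.1‖ + ‖p.2 - p'.2‖ < e ∧
      supNormOn L (j Φ) - γ ≤ supNormOn L (j Φ') ∧
      supNormOn L (j Φ') ≤ supNormOn L (j Φ) + 2 * r ∧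
      supNormOn L (j Φ') - γ' < ‖j Φ' p'‖ := by
  classical
  set M := supNormOn L (j Φ) with hM
  set w := j Φ p with hw
  obtain ⟨hp1n, hp2n⟩ := hLsphere p hp
  have hwM : ‖w‖ ≤ M := aux_le_sup hjmem Φ hp
  have hrϖ : r * ϖ ≤ 1 := mul_le_one₀ hr1 hϖ0.le hϖ1
  have hw0 : (0:ℝ) < ‖w‖ := by linarith
  obtain ⟨xs, ye, hxs1, hye1, hσ, hfar⟩ := hPt p hp
  -- norming functional for p.1
  have hx0 : p.1 ≠ 0 := by intro h; rw [h, norm_zero] at hp1n; norm_num at hp1n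
  obtain ⟨g, hg1, hgp⟩ := exists_dual_vector ℝ p.1 (norm_ne_zero_iff.mpr hx0)
  have hgp1 : g p.1 = 1 := by simpa [hp1n] using hgp
  -- almost norming vector for p.2
  obtain ⟨y₀, hy₀n, hy₀v⟩ := p.2.exists_lt_apply_of_lt_opNorm
    (show (1 - ϖ/4 : ℝ) < ‖p.2‖ by rw [hp2n]; linarith)
  have habs : 1 - ϖ/4 < |p.2 y₀| := by rwa [Real.norm_eq_abs] at hy₀v
  set ty : Y := if 0 ≤ p.2 y₀ then y₀ else -y₀ with hty_def
  have htyn : ‖ty‖ ≤ 1 := by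
    rw [hty_def]; split <;> simpa using hy₀n.le
  have htyv : 1 - ϖ/4 < p.2 ty := by
    rw [hty_def]; split
    · rwa [abs_of_nonneg (by assumption)] at habs
    · rw [map_neg]; rwa [abs_of_neg (by linarith [not_le.mp (by assumption)])] at habs
  have htyv1 : p.2 ty ≤ 1 := by
    have h1 := p.2.le_opNorm ty
    rw [hp2n, one_mul, Real.norm_eq_abs] at h1
    linarith [le_abs_self (p.2 ty)]
  -- the rank ≤ 2 operator
  set T : X →L[ℝ] Y := g.smulRight ye + xs.smulRight ty with hT_def
  have hTapp : ∀ q : X × (Y →L[ℝ] ℝ), q.2 (T q.1) = g q.1 * q.2 ye + xs q.1 * q.2 ty := by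
    intro q
    rw [hT_def]
    simp only [ContinuousLinearMap.add_apply, ContinuousLinearMap.smulRight_apply,
      map_add, map_smul, smul_eq_mul]
  have hTnorm : ‖T‖ ≤ 2 := by
    rw [hT_def]
    calc ‖g.smulRight ye + xs.smulRight ty‖
        ≤ ‖g.smulRight ye‖ + ‖xs.smulRight ty‖ := norm_add_le _ _
      _ = ‖g‖ * ‖ye‖ + ‖xs‖ * ‖ty‖ := by
          rw [ContinuousLinearMap.norm_smulRight_apply, ContinuousLinearMap.norm_smulRight_apply]
      _ ≤ 2 := by
          have h1 : ‖g‖ * ‖ye‖ ≤ 1 := mul_le_one₀ hg1.le (norm_nonneg _) hye1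
          have h2 : ‖xs‖ * ‖ty‖ ≤ 1 := mul_le_one₀ hxs1 (norm_nonneg _) htyn
          linarith
  have hTfin : FinRank T := by
    unfold FinRank
    have hle : LinearMap.range T.toLinearMap ≤ Submodule.span ℝ {ye, ty} := by
      rintro _ ⟨x, rfl⟩
      have hx : T.toLinearMap x = (g x) • ye + (xs x) • ty := by
        show T x = _
        rw [hT_def]
        simp only [ContinuousLinearMap.add_apply, ContinuousLinearMap.smulRight_apply]
      rw [hx]
      exact Submodule.add_mem _
        (Submodule.smul_mem _ _ (Submodule.subset_span (by simp)))
        (Submodule.smul_mem _ _ (Submodule.subset_span (by simp)))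
    haveI : FiniteDimensional ℝ (Submodule.span ℝ ({ye, ty} : Set Y)) :=
      FiniteDimensional.span_of_finite ℝ (Set.toFinite _)
    exact Submodule.finiteDimensional_of_le hle
  obtain ⟨Θ, hΘ, hΘnorm⟩ := hjcontains T hTfin ((2⁻¹ : ℝ) • w)
  set c := p.2 (T p.1) / 2 with hc_def
  have ha1 : xs p.1 ≤ 1 := by
    have h1 := xs.le_opNorm p.1
    rw [hp1n, mul_one, Real.norm_eq_abs] at h1
    linarith [le_abs_self (xs p.1)]
  have hb1 : |p.2 ye| ≤ 1 := by
    have h1 := p.2.le_opNorm ye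
    rw [hp2n, one_mul, Real.norm_eq_abs] at h1
    linarith
  have hc_eq : c = (p.2 ye + xs p.1 * p.2 ty) / 2 := by
    rw [hc_def, hTapp, hgp1]; ring
  have hat : xs p.1 - ϖ/4 ≤ xs p.1 * p.2 ty := by
    have h1t : 0 ≤ 1 - p.2 ty := by linarith
    have h2 := mul_le_mul_of_nonneg_right ha1 h1t
    have h3 : 1 - p.2 ty ≤ ϖ/4 := by linarith
    linarith [h2, h3]
  have hcge : (xs p.1 + p.2 ye) / 2 - ϖ/8 ≤ c := by rw [hc_eq]; linarith
  have hclo : 3*ϖ/8 ≤ c := by linarith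
  have hchi : c ≤ 1 := by
    have h1 : |p.2 (T p.1)| ≤ ‖p.2‖ * ‖T p.1‖ := by
      rw [← Real.norm_eq_abs]; exact p.2.le_opNorm _
    have h2 : ‖T p.1‖ ≤ ‖T‖ * ‖p.1‖ := T.le_opNorm _
    rw [hp2n, one_mul] at h1
    rw [hp1n, mul_one] at h2
    have h3 := le_abs_self (p.2 (T p.1))
    rw [hc_def]
    linarith
  have hGall : ∀ q ∈ L, |q.2 (T q.1) / 2| ≤ 1 := by
    intro q hq
    obtain ⟨hq1, hq2⟩ := hLsphere q hq
    have h1 : |q.2 (T q.1)| ≤ ‖q.2‖ * ‖T q.1‖ := by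
      rw [← Real.norm_eq_abs]; exact q.2.le_opNorm _
    have h2 : ‖T q.1‖ ≤ ‖T‖ * ‖q.1‖ := T.le_opNorm _
    rw [hq2, one_mul] at h1
    rw [hq1, mul_one] at h2
    rw [abs_div, abs_two]
    linarith
  have hGfar : ∀ q ∈ L, e ≤ dHG p q → |q.2 (T q.1) / 2| ≤ c - 3*ϖ/8 := by
    intro q hq hd
    obtain ⟨hq1, hq2⟩ := hLsphere q hq
    have hfq := hfar q hq hd
    have hgq : |g q.1| ≤ 1 := by
      have h1 : |g q.1| ≤ ‖g‖ * ‖q.1‖ := by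
        rw [← Real.norm_eq_abs]; exact g.le_opNorm _
      rw [hg1, hq1] at h1; linarith
    have hqty : |q.2 ty| ≤ 1 := by
      have h1 : |q.2 ty| ≤ ‖q.2‖ * ‖ty‖ := by
        rw [← Real.norm_eq_abs]; exact q.2.le_opNorm _
      rw [hq2, one_mul] at h1; linarith
    have hexp : q.2 (T q.1) = g q.1 * q.2 ye + xs q.1 * q.2 ty := hTapp q
    have h1 : |q.2 (T q.1) / 2| ≤ (|g q.1| * |q.2 ye| + |xs q.1| * |q.2 ty|) / 2 := by
      rw [hexp, abs_div, abs_two]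
      gcongr
      calc |g q.1 * q.2 ye + xs q.1 * q.2 ty|
          ≤ |g q.1 * q.2 ye| + |xs q.1 * q.2 ty| := abs_add_le _ _
        _ = |g q.1| * |q.2 ye| + |xs q.1| * |q.2 ty| := by rw [abs_mul, abs_mul]
    have h2 : |g q.1| * |q.2 ye| ≤ |q.2 ye| :=
      mul_le_of_le_one_left (abs_nonneg _) hgq
    have h3 : |xs q.1| * |q.2 ty| ≤ |xs q.1| :=
      mul_le_of_le_one_right (abs_nonneg _) hqty
    have h4 : |xs q.1| + |q.2 ye| ≤ xs p.1 + p.2 ye - ϖ := hfq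
    linarith
  -- the perturbed function
  set Φ' := Φ + r • Θ with hΦ'_def
  have happ : ∀ q ∈ L, j Φ' q = j Φ q + (r * (q.2 (T q.1) / 2)) • w := by
    intro q hq
    have h0 : j Φ' = j Φ + r • j Θ := by rw [hΦ'_def, map_add, map_smul]
    rw [h0]
    simp only [Pi.add_apply, Pi.smul_apply]
    rw [hΘ q hq, smul_smul, smul_smul]
    congr 1
    ring
  have hΘn2 : ‖Θ‖ ≤ ‖w‖ := by
    have h1 : ‖(2⁻¹ : ℝ) • w‖ = 2⁻¹ * ‖w‖ := by
      rw [norm_smul, Real.norm_eq_abs]; norm_num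
    rw [h1] at hΘnorm
    have h2 : ‖T‖ * (2⁻¹ * ‖w‖) ≤ 2 * (2⁻¹ * ‖w‖) :=
      mul_le_mul_of_nonneg_right hTnorm (by positivity)
    linarith
  have hdiff : ‖Φ' - Φ‖ ≤ 2 * r := by
    have h1 : Φ' - Φ = r • Θ := by rw [hΦ'_def]; abel
    rw [h1, norm_smul, Real.norm_eq_abs, abs_of_pos hr0]
    have h2 : r * ‖Θ‖ ≤ r * 2 :=
      mul_le_mul_of_nonneg_left (hΘn2.trans (hwM.trans hMhi)) hr0.le
    linarith
  have hM'hi : supNormOn L (j Φ') ≤ M + 2 * r := by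
    apply aux_sup_le hLne
    intro q hq
    rw [happ q hq]
    have h1 : ‖(r * (q.2 (T q.1) / 2)) • w‖ = |r * (q.2 (T q.1) / 2)| * ‖w‖ := by
      rw [norm_smul, Real.norm_eq_abs]
    have h2 : |r * (q.2 (T q.1) / 2)| ≤ r := by
      rw [abs_mul, abs_of_pos hr0]
      have := mul_le_mul_of_nonneg_left (hGall q hq) hr0.le
      linarith
    calc ‖j Φ q + (r * (q.2 (T q.1) / 2)) • w‖
        ≤ ‖j Φ q‖ + ‖(r * (q.2 (T q.1) / 2)) • w‖ := norm_add_le _ _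
      _ ≤ M + 2 * r := by
          rw [h1]
          have h3 : ‖j Φ q‖ ≤ M := aux_le_sup hjmem Φ hq
          have h4 : |r * (q.2 (T q.1) / 2)| * ‖w‖ ≤ r * ‖w‖ :=
            mul_le_mul_of_nonneg_right h2 (norm_nonneg w)
          have h5 : r * ‖w‖ ≤ r * 2 :=
            mul_le_mul_of_nonneg_left (hwM.trans hMhi) hr0.le
          linarith
  have hΦ'p : j Φ' p = (1 + r * c) • w := by
    rw [happ p hp, ← hw, ← hc_def, add_smul, one_smul]
  have hc0 : (0:ℝ) ≤ c := by linarith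
  have hrc0 : (0:ℝ) ≤ r * c := mul_nonneg hr0.le hc0
  have h1rc : (0:ℝ) < 1 + r * c := by linarith
  have hnΦ'p : ‖j Φ' p‖ = (1 + r * c) * ‖w‖ := by
    rw [hΦ'p, norm_smul, Real.norm_eq_abs, abs_of_pos h1rc]
  have hwle : ‖w‖ ≤ ‖j Φ' p‖ := by
    rw [hnΦ'p]
    have h2 : 1 * ‖w‖ ≤ (1 + r * c) * ‖w‖ :=
      mul_le_mul_of_nonneg_right (by linarith) (norm_nonneg w)
    linarith
  have hM'lo : M - γ ≤ supNormOn L (j Φ') := by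
    have := aux_le_sup hjmem Φ' hp
    linarith
  -- pick an almost-maximizing point for Φ'
  have hlt : supNormOn L (j Φ') - γ' < sSup ((fun q => ‖j Φ' q‖) '' L) := by
    have : supNormOn L (j Φ') = sSup ((fun q => ‖j Φ' q‖) '' L) := rfl
    rw [← this]
    linarith
  obtain ⟨_, ⟨p'', hp'', rfl⟩, hp''v⟩ := exists_lt_of_lt_csSup (hLne.image _) hlt
  have hp''v : supNormOn L (j Φ') - γ' < ‖j Φ' p''‖ := hp''v
  -- the new point is d_H-close to p
  have hfar'' : dHG p p'' < e := by
    by_contra hcon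
    push_neg at hcon
    have hGb := hGfar p'' hp'' hcon
    have hub : ‖j Φ' p''‖ ≤ M + r * c * M - 3/8 * (r * ϖ) * M := by
      rw [happ p'' hp'']
      have h1 : ‖(r * (p''.2 (T p''.1) / 2)) • w‖ = |r| * |p''.2 (T p''.1) / 2| * ‖w‖ := by
        rw [norm_smul, Real.norm_eq_abs, abs_mul]
      have h2 : |r| * |p''.2 (T p''.1) / 2| * ‖w‖ ≤ r * (c - 3 * ϖ / 8) * M := by
        rw [abs_of_pos hr0]
        have hge0 : (0:ℝ) ≤ c - 3 * ϖ / 8 := le_trans (abs_nonneg _) hGb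
        have hbb : |p''.2 (T p''.1) / 2| * ‖w‖ ≤ (c - 3 * ϖ / 8) * M :=
          mul_le_mul hGb hwM (norm_nonneg _) hge0
        have := mul_le_mul_of_nonneg_left hbb hr0.le
        linarith [this]
      calc ‖j Φ p'' + (r * (p''.2 (T p''.1) / 2)) • w‖
          ≤ ‖j Φ p''‖ + ‖(r * (p''.2 (T p''.1) / 2)) • w‖ := norm_add_le _ _
        _ ≤ M + r * (c - 3 * ϖ / 8) * M := by
            rw [h1]
            have h3 : ‖j Φ p''‖ ≤ M := aux_le_sup hjmem Φ hp''
            linarith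
        _ = M + r * c * M - 3/8 * (r * ϖ) * M := by ring
    have hlb : (1 + r * c) * (M - γ) ≤ ‖j Φ' p‖ := by
      rw [hnΦ'p]
      exact mul_le_mul_of_nonneg_left hnear.le h1rc.le
    have hsup' : ‖j Φ' p‖ ≤ supNormOn L (j Φ') := aux_le_sup hjmem Φ' hp
    have hrc1 : r * c ≤ 1 := mul_le_one₀ hr1 hc0 hchi
    have hrcγ : r * c * γ ≤ γ := mul_le_of_le_one_left hγ0.le hrc1
    have hAM : 3/16 * (r * ϖ) ≤ 3/8 * (r * ϖ) * M := by
      have := mul_le_mul_of_nonneg_left hMlo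
        (show (0:ℝ) ≤ 3/8 * (r * ϖ) by positivity)
      linarith
    have hexp : (1 + r * c) * (M - γ) = M + r * c * M - γ - r * c * γ := by ring
    linarith [mul_pos hr0 hϖ0]
  -- flip the sign if necessary
  by_cases hside : ‖p.1 - p''.1‖ + ‖p.2 - p''.2‖ < e
  · exact ⟨Φ', p'', hp'', hdiff, hside, hM'lo, hM'hi, hp''v⟩
  · have hother : ‖p.1 + p''.1‖ + ‖p.2 + p''.2‖ < e := by
      rcases min_lt_iff.1 hfar'' with h | h
      · exact absurd h hside
      · exact h
    refine ⟨Φ', -p'', hLsym p'' hp'', hdiff, ?_, hM'lo, hM'hi, ?_⟩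
    · have h1 : (-p'').1 = -p''.1 := rfl
      have h2 : (-p'').2 = -p''.2 := rfl
      rw [h1, h2, sub_neg_eq_add, sub_neg_eq_add]
      exact hother
    · rw [(hjmem Φ').2.2 p'' hp'']
      exact hp''v

end auxiliaries

theorem statement1
    [CompleteSpace X] [CompleteSpace Y] [CompleteSpace W]
    (L : Set (X × (Y →L[ℝ] ℝ))) (hLne : L.Nonempty)
    (hLsphere : ∀ p ∈ L, ‖p.1‖ = 1 ∧ ‖p.2‖ = 1)
    (hLsym : ∀ p ∈ L, -p ∈ L) (hLclosed : IsClosed L)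
    (hP : PropP L)
    {Z : Type*} [NormedAddCommGroup Z] [NormedSpace ℝ Z] [CompleteSpace Z]
    (j : Z →ₗ[ℝ] (X × (Y →L[ℝ] ℝ)) → W)
    (hjinj : Function.Injective j)
    (hjmem : ∀ Φ : Z, IsCbe L (j Φ))
    (hjnorm : ∀ Φ : Z, supNormOn L (j Φ) ≤ ‖Φ‖)
    (hjcontains : ∀ T : X →L[ℝ] Y, FinRank T → ∀ w : W,
      ∃ Φ : Z, (∀ p ∈ L, j Φ p = (p.2 (T p.1)) • w) ∧ ‖Φ‖ ≤ ‖T‖ * ‖w‖) :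
    ∀ ε : ℝ, 0 < ε → ∃ η > (0 : ℝ), ∀ Φ : Z, supNormOn L (j Φ) = 1 →
      ∀ p ∈ L, 1 - η < ‖j Φ p‖ →
        ∃ Ψ : Z, supNormOn L (j Ψ) = 1 ∧ ∃ q ∈ L, ‖j Ψ q‖ = 1 ∧
          ‖p.1 - q.1‖ + ‖p.2 - q.2‖ < ε ∧ supNormOn L (j (Ψ - Φ)) < ε := by
  classical
  intro ε hε
  obtain ⟨ε₀, hε₀, hPP⟩ := hP
  set δ := min ε (min ε₀ 1) / 2 with hδ_def
  have hδ0 : 0 < δ := by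
    have h1 : 0 < min ε (min ε₀ 1) := lt_min hε (lt_min hε₀ one_pos)
    rw [hδ_def]; linarith
  have hδε : δ ≤ ε / 2 := by
    have := min_le_left ε (min ε₀ 1); rw [hδ_def]; linarith
  have hδ1 : δ ≤ 1 / 2 := by
    have h1 := min_le_right ε (min ε₀ 1)
    have h2 := min_le_right ε₀ (1:ℝ)
    rw [hδ_def]; linarith
  have hδε₀ : δ < ε₀ := by
    have h1 := min_le_right ε (min ε₀ 1)
    have h2 := min_le_left ε₀ (1:ℝ)
    rw [hδ_def]; linarith
  -- geometric scales
  obtain ⟨es, hes⟩ : ∃ es : ℕ → ℝ, ∀ n, es n = δ / 4 * (1/2)^n := ⟨_, fun _ => rfl⟩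
  obtain ⟨rs, hrs⟩ : ∃ rs : ℕ → ℝ, ∀ n, rs n = δ / 16 * (1/2)^n := ⟨_, fun _ => rfl⟩
  have hpow0 : ∀ n : ℕ, (0:ℝ) < (1/2)^n := fun n => by positivity
  have hpow1 : ∀ n : ℕ, ((1:ℝ)/2)^n ≤ 1 := fun n =>
    pow_le_one₀ (by norm_num) (by norm_num)
  have hes0 : ∀ n, 0 < es n := fun n => by rw [hes]; positivity
  have hrs0 : ∀ n, 0 < rs n := fun n => by rw [hrs]; positivity
  have hrs1 : ∀ n, rs n ≤ 1 := fun n => by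
    rw [hrs]
    have h1 := hpow1 n
    have h2 := hpow0 n
    nlinarith
  -- property (P) data at each scale
  have hchoice : ∀ n : ℕ, ∃ ϖ : ℝ, 0 < ϖ ∧ ϖ ≤ 1 ∧ ∀ p ∈ L,
      ∃ (xs : X →L[ℝ] ℝ) (ye : Y), ‖xs‖ ≤ 1 ∧ ‖ye‖ ≤ 1 ∧ ϖ ≤ xs p.1 + p.2 ye ∧
        ∀ q ∈ L, es n ≤ dHG p q → |xs q.1| + |q.2 ye| ≤ xs p.1 + p.2 ye - ϖ := by
    intro n
    have h2 : es n < ε₀ := by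
      rw [hes]
      have h1 := hpow1 n
      have h2 := hpow0 n
      nlinarith
    obtain ⟨ϖ', hϖ'0, hPp⟩ := hPP (es n) (hes0 n) h2
    refine ⟨min ϖ' 1, lt_min hϖ'0 one_pos, min_le_right _ _, ?_⟩
    intro p hp
    obtain ⟨xs, ye, hxs, hye, hfar⟩ := hPp p hp
    by_cases hex : ∃ q ∈ L, es n ≤ dHG p q
    · obtain ⟨q₁, hq₁, hdq₁⟩ := hex
      have h3 := hfar q₁ hq₁ hdq₁
      have h4 : min ϖ' 1 ≤ xs p.1 + p.2 ye := by
        have := abs_nonneg (xs q₁.1)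
        have := abs_nonneg (q₁.2 ye)
        have := min_le_left ϖ' (1:ℝ)
        linarith
      refine ⟨xs, ye, hxs, hye, h4, fun q hq hd => ?_⟩
      have := hfar q hq hd
      have := min_le_left ϖ' (1:ℝ)
      linarith
    · push_neg at hex
      obtain ⟨hp1n, hp2n⟩ := hLsphere p hp
      obtain ⟨g, hg1, hgp1⟩ := norming_fst hp1n
      obtain ⟨y, hyn, hyv, _⟩ := norming_snd hp2n (show (0:ℝ) < 1 by norm_num)
      refine ⟨g, y, hg1.le, hyn, ?_, fun q hq hd => absurd hd (not_le.mpr (hex q hq))⟩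
      have := min_le_right ϖ' (1:ℝ)
      rw [hgp1]
      linarith
  choose ϖs hϖ0 hϖ1 hPt using hchoice
  obtain ⟨γs, hγs⟩ : ∃ γs : ℕ → ℝ,
      ∀ n, γs n = min (rs n * ϖs n) (rs (n-1) * ϖs (n-1)) / 64 := ⟨_, fun _ => rfl⟩
  have hγ0 : ∀ n, 0 < γs n := fun n => by
    rw [hγs]
    have h1 := mul_pos (hrs0 n) (hϖ0 n)
    have h2 := mul_pos (hrs0 (n-1)) (hϖ0 (n-1))
    have := lt_min h1 h2
    linarith
  have hγle : ∀ n, γs n ≤ rs n * ϖs n / 64 := fun n => by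
    rw [hγs]
    have := min_le_left (rs n * ϖs n) (rs (n-1) * ϖs (n-1))
    linarith
  have hγle' : ∀ n, γs (n+1) ≤ rs n * ϖs n / 64 := fun n => by
    rw [hγs, Nat.add_sub_cancel]
    have := min_le_right (rs (n+1) * ϖs (n+1)) (rs n * ϖs n)
    linarith
  have hγr : ∀ n, γs n ≤ rs n := fun n => by
    have h1 := hγle n
    have h2 : rs n * ϖs n ≤ rs n * 1 := mul_le_mul_of_nonneg_left (hϖ1 n) (hrs0 n).le
    have := hrs0 n
    linarith
  -- partial sums
  have hsum_r : ∀ n, ∑ k ∈ Finset.range n, rs k ≤ δ / 8 := by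
    intro n
    have h1 : ∑ k ∈ Finset.range n, rs k = δ/16 * ∑ k ∈ Finset.range n, ((1:ℝ)/2)^k := by
      rw [Finset.mul_sum]
      exact Finset.sum_congr rfl fun k _ => hrs k
    rw [h1]
    have h2 := sum_geometric_two_le n
    have h3 : δ/16 * ∑ k ∈ Finset.range n, ((1:ℝ)/2)^k ≤ δ/16 * 2 :=
      mul_le_mul_of_nonneg_left h2 (by linarith)
    linarith
  have hsum_γ : ∀ n, ∑ k ∈ Finset.range n, γs k ≤ δ / 8 := fun n =>
    (Finset.sum_le_sum fun k _ => hγr k).trans (hsum_r n)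
  have hsum_e : ∀ n, ∑ k ∈ Finset.range n, es k ≤ δ / 2 := by
    intro n
    have h1 : ∑ k ∈ Finset.range n, es k = δ/4 * ∑ k ∈ Finset.range n, ((1:ℝ)/2)^k := by
      rw [Finset.mul_sum]
      exact Finset.sum_congr rfl fun k _ => hes k
    rw [h1]
    have h2 := sum_geometric_two_le n
    have h3 : δ/4 * ∑ k ∈ Finset.range n, ((1:ℝ)/2)^k ≤ δ/4 * 2 :=
      mul_le_mul_of_nonneg_left h2 (by linarith)
    linarith
  -- the answer
  refine ⟨γs 0, hγ0 0, ?_⟩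
  intro Φ hΦsup p hp hnear
  -- construct the iteration
  obtain ⟨u, hu0, huInv, huRel⟩ := exists_seq_aux
    (fun n s => s.2 ∈ L ∧ 1 - 2 * ∑ k ∈ Finset.range n, γs k ≤ supNormOn L (j s.1) ∧
      supNormOn L (j s.1) ≤ 1 + 2 * ∑ k ∈ Finset.range n, rs k ∧
      supNormOn L (j s.1) - γs n < ‖j s.1 s.2‖)
    (fun n s s' => ‖s'.1 - s.1‖ ≤ 2 * rs n ∧
      ‖s.2.1 - s'.2.1‖ + ‖s.2.2 - s'.2.2‖ < es n)
    (Φ, p)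
    (by
      refine ⟨hp, ?_, ?_, ?_⟩
      · simp [hΦsup]
      · simp [hΦsup]
      · rw [hΦsup]; exact hnear)
    (by
      rintro n ⟨Φn, pn⟩ ⟨hpn, hlo, hhi, hnearn⟩
      have hMlo : 1/2 ≤ supNormOn L (j Φn) := by
        have := hsum_γ n
        linarith
      have hMhi : supNormOn L (j Φn) ≤ 2 := by
        have := hsum_r n
        linarith
      obtain ⟨Φ', p', hp'L, hdiff, hclose, hl, hh, hn⟩ :=
        key_step hLne hLsphere hLsym hjmem hjcontains (hϖ0 n) (hϖ1 n) (hrs0 n) (hrs1 n)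
          (hγ0 n) (hγle n) (hγ0 (n+1)) (hγle' n) (hPt n) Φn hpn hMlo hMhi hnearn
      refine ⟨(Φ', p'), ⟨hp'L, ?_, ?_, hn⟩, hdiff, hclose⟩
      · rw [Finset.sum_range_succ]
        have := hγ0 n
        linarith
      · rw [Finset.sum_range_succ]
        linarith)
  have hΦs0 : (u 0).1 = Φ := by rw [hu0]
  have hps0 : (u 0).2 = p := by rw [hu0]
  have hmem : ∀ n, (u n).2 ∈ L := fun n => (huInv n).1
  -- convergence of the functions
  have hgeom : ∀ n, dist ((u n).1) ((u (n+1)).1) ≤ δ/8 * (1/2)^n := by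
    intro n
    rw [dist_eq_norm, norm_sub_rev]
    have h1 := (huRel n).1
    have h2 := hrs n
    linarith
  have hcΦ : CauchySeq (fun n => (u n).1) :=
    cauchySeq_of_le_geometric (1/2) (δ/8) (by norm_num) hgeom
  obtain ⟨Ψ', hΨ'⟩ := cauchySeq_tendsto_of_complete hcΦ
  have hdistΦ : ‖Ψ' - Φ‖ ≤ δ/4 := by
    have h := dist_le_of_le_geometric_of_tendsto₀ (1/2) (δ/8) (by norm_num) hgeom hΨ'
    rw [hΦs0, dist_eq_norm, norm_sub_rev] at h
    have h2 : δ/8/(1-1/2:ℝ) = δ/4 := by ring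
    linarith [h2 ▸ h]
  -- convergence of the points
  have hgeomp : ∀ n, dist ((u n).2) ((u (n+1)).2) ≤ δ/4 * (1/2)^n := by
    intro n
    have h1 := (huRel n).2
    rw [hes] at h1
    rw [Prod.dist_eq]
    apply max_le
    · rw [dist_eq_norm]
      linarith [norm_nonneg ((u n).2.2 - (u (n+1)).2.2)]
    · rw [dist_eq_norm]
      linarith [norm_nonneg ((u n).2.1 - (u (n+1)).2.1)]
  have hcp : CauchySeq (fun n => (u n).2) :=
    cauchySeq_of_le_geometric (1/2) (δ/4) (by norm_num) hgeomp
  obtain ⟨q, hq⟩ := cauchySeq_tendsto_of_complete hcp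
  have hqL : q ∈ L := hLclosed.mem_of_tendsto hq (Eventually.of_forall hmem)
  -- distance from p to q
  have htriX : ∀ a b c : X, ‖a - c‖ ≤ ‖a - b‖ + ‖b - c‖ := fun a b c => by
    simpa [dist_eq_norm] using dist_triangle a b c
  have htriY : ∀ a b c : Y →L[ℝ] ℝ, ‖a - c‖ ≤ ‖a - b‖ + ‖b - c‖ := fun a b c => by
    simpa [dist_eq_norm] using dist_triangle a b c
  have hd2p : ∀ n, ‖p.1 - (u n).2.1‖ + ‖p.2 - (u n).2.2‖ ≤ δ/2 := by
    have key : ∀ n, ‖p.1 - (u n).2.1‖ + ‖p.2 - (u n).2.2‖ ≤ ∑ k ∈ Finset.range n, es k := by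
      intro n
      induction n with
      | zero => simp [hps0]
      | succ m ih =>
        have h1 := (huRel m).2
        have t1 := htriX p.1 (u m).2.1 (u (m+1)).2.1
        have t2 := htriY p.2 (u m).2.2 (u (m+1)).2.2
        rw [Finset.sum_range_succ]
        linarith
    intro n
    exact (key n).trans (hsum_e n)
  have hfc : Continuous fun s : X × (Y →L[ℝ] ℝ) => ‖p.1 - s.1‖ + ‖p.2 - s.2‖ := by fun_prop
  have hd2q : ‖p.1 - q.1‖ + ‖p.2 - q.2‖ ≤ δ/2 :=
    le_of_tendsto ((hfc.tendsto q).comp hq) (Eventually.of_forall hd2p)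
  -- convergence of sup norms
  have hnormconv : Tendsto (fun n => ‖(u n).1 - Ψ'‖) atTop (𝓝 0) :=
    tendsto_iff_norm_sub_tendsto_zero.1 hΨ'
  have hMtend : Tendsto (fun n => supNormOn L (j ((u n).1))) atTop (𝓝 (supNormOn L (j Ψ'))) := by
    rw [tendsto_iff_dist_tendsto_zero]
    apply squeeze_zero (fun n => dist_nonneg) _ hnormconv
    intro n
    rw [Real.dist_eq, abs_le]
    constructor
    · have := aux_tri hLne hjmem hjnorm Ψ' ((u n).1)
      rw [norm_sub_rev] at this
      linarith
    · have := aux_tri hLne hjmem hjnorm ((u n).1) Ψ'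
      linarith
  -- convergence of values
  have hcontΨ' : ContinuousOn (j Ψ') L := (hjmem Ψ').1
  have hpsq : Tendsto (fun n => (u n).2) atTop (𝓝[L] q) :=
    tendsto_nhdsWithin_iff.2 ⟨hq, Eventually.of_forall hmem⟩
  have hJcont : Tendsto (fun n => j Ψ' ((u n).2)) atTop (𝓝 (j Ψ' q)) :=
    (hcontΨ' q hqL).tendsto.comp hpsq
  have hvanish : Tendsto (fun n => ‖j ((u n).1) ((u n).2) - j Ψ' q‖) atTop (𝓝 0) := by
    apply squeeze_zero (fun n => norm_nonneg _)
      (g := fun n => ‖(u n).1 - Ψ'‖ + ‖j Ψ' ((u n).2) - j Ψ' q‖)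
    · intro n
      have h2 : j ((u n).1) ((u n).2) - j Ψ' ((u n).2) = j ((u n).1 - Ψ') ((u n).2) := by
        rw [map_sub]; simp
      have h1 : ‖j ((u n).1) ((u n).2) - j Ψ' ((u n).2)‖ ≤ ‖(u n).1 - Ψ'‖ := by
        rw [h2]
        exact (aux_le_sup hjmem _ (hmem n)).trans (hjnorm _)
      have h3 : ‖j ((u n).1) ((u n).2) - j Ψ' q‖ ≤
          ‖j ((u n).1) ((u n).2) - j Ψ' ((u n).2)‖ + ‖j Ψ' ((u n).2) - j Ψ' q‖ := by
        simpa [dist_eq_norm] using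
          dist_triangle (j ((u n).1) ((u n).2)) (j Ψ' ((u n).2)) (j Ψ' q)
      linarith
    · have hB : Tendsto (fun n => ‖j Ψ' ((u n).2) - j Ψ' q‖) atTop (𝓝 0) :=
        tendsto_iff_norm_sub_tendsto_zero.1 hJcont
      simpa using hnormconv.add hB
  have hvtend : Tendsto (fun n => ‖j ((u n).1) ((u n).2)‖) atTop (𝓝 ‖j Ψ' q‖) :=
    (tendsto_iff_norm_sub_tendsto_zero.2 hvanish).norm
  -- γs tends to 0
  have hγtend : Tendsto γs atTop (𝓝 0) := by
    apply squeeze_zero (fun n => (hγ0 n).le) (g := fun n => δ/16 * (1/2)^n)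
    · intro n
      have := hγr n
      have := hrs n
      linarith
    · have h1 : Tendsto (fun n : ℕ => ((1:ℝ)/2)^n) atTop (𝓝 0) :=
        tendsto_pow_atTop_nhds_zero_of_lt_one (by norm_num) (by norm_num)
      have := h1.const_mul (δ/16)
      simpa using this
  -- the limit attains the sup norm
  have hMq : ‖j Ψ' q‖ = supNormOn L (j Ψ') := by
    refine le_antisymm ?_ ?_
    · exact le_of_tendsto_of_tendsto' hvtend hMtend
        (fun n => aux_le_sup hjmem _ (hmem n))
    · have h := le_of_tendsto_of_tendsto' (hMtend.sub hγtend) hvtend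
        (fun n => ((huInv n).2.2.2).le)
      simpa using h
  set M := supNormOn L (j Ψ') with hM_def
  have hM12 : 1/2 ≤ M := by
    apply ge_of_tendsto hMtend
    filter_upwards with n
    have h1 := (huInv n).2.1
    have h2 := hsum_γ n
    linarith
  have hM0 : (0:ℝ) < M := by linarith
  have hM1 : M ≤ 1 + δ/4 := by
    have h := aux_tri hLne hjmem hjnorm Ψ' Φ
    rw [hΦsup] at h
    linarith
  have hM2 : 1 - δ/4 ≤ M := by
    have h := aux_tri hLne hjmem hjnorm Φ Ψ'
    rw [hΦsup, norm_sub_rev] at h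
    linarith
  -- normalize
  set Ψ : Z := M⁻¹ • Ψ' with hΨ_def
  have hjΨ : ∀ s, j Ψ s = M⁻¹ • j Ψ' s := by
    intro s
    rw [hΨ_def, map_smul]
    rfl
  have hinvpos : (0:ℝ) < M⁻¹ := inv_pos.2 hM0
  have hΨq : ‖j Ψ q‖ = 1 := by
    rw [hjΨ, norm_smul, Real.norm_eq_abs, abs_of_pos hinvpos, hMq]
    exact inv_mul_cancel₀ hM0.ne'
  have hΨsup : supNormOn L (j Ψ) = 1 := by
    refine le_antisymm ?_ ?_
    · apply aux_sup_le hLne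
      intro s hs
      rw [hjΨ, norm_smul, Real.norm_eq_abs, abs_of_pos hinvpos]
      have h1 : ‖j Ψ' s‖ ≤ M := aux_le_sup hjmem Ψ' hs
      have h2 : M⁻¹ * ‖j Ψ' s‖ ≤ M⁻¹ * M := mul_le_mul_of_nonneg_left h1 hinvpos.le
      rw [inv_mul_cancel₀ hM0.ne'] at h2
      exact h2
    · rw [← hΨq]
      exact aux_le_sup hjmem Ψ hqL
  -- final estimate
  have hfinal : supNormOn L (j (Ψ - Φ)) ≤ δ/2 := by
    apply aux_sup_le hLne
    intro s hs
    have hsplit : j (Ψ - Φ) s = (M⁻¹ - 1) • j Ψ' s + j (Ψ' - Φ) s := by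
      have h1 : Ψ - Φ = (M⁻¹ - 1) • Ψ' + (Ψ' - Φ) := by
        rw [hΨ_def]; module
      rw [h1, map_add, map_smul]
      simp
    rw [hsplit]
    have h1 : ‖(M⁻¹ - 1) • j Ψ' s‖ ≤ |M⁻¹ - 1| * M := by
      rw [norm_smul, Real.norm_eq_abs]
      exact mul_le_mul_of_nonneg_left (aux_le_sup hjmem Ψ' hs) (abs_nonneg _)
    have h2 : |M⁻¹ - 1| * M = |1 - M| := by
      have hfs : (M⁻¹ - 1) * M = 1 - M := by field_simp
      calc |M⁻¹ - 1| * M = |M⁻¹ - 1| * |M| := by rw [abs_of_pos hM0]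
        _ = |(M⁻¹ - 1) * M| := (abs_mul _ _).symm
        _ = |1 - M| := by rw [hfs]
    have h3 : |1 - M| ≤ δ/4 := abs_le.2 ⟨by linarith, by linarith⟩
    have h4 : ‖j (Ψ' - Φ) s‖ ≤ δ/4 :=
      (aux_le_sup hjmem _ hs).trans ((hjnorm _).trans hdistΦ)
    calc ‖(M⁻¹ - 1) • j Ψ' s + j (Ψ' - Φ) s‖
        ≤ ‖(M⁻¹ - 1) • j Ψ' s‖ + ‖j (Ψ' - Φ) s‖ := norm_add_le _ _
      _ ≤ δ/2 := by rw [h2] at h1; linarith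
  refine ⟨Ψ, hΨsup, q, hqL, hΨq, ?_, ?_⟩
  · linarith
  · linarith


end
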